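/- Let M_a(t) denote the number of 3×3 magic squares with all entries positive integers and magic sum t. Then for every integer t ≥ 1: M_a(t) = 0 if t is not divisible by 3; 9·M_a(t) = 2(t²−16t+72) if t ≡ 0 (mod 18); 9·M_a(t) = 2(t−3)(t−13) if t ≡ 3 (mod 18); 9·M_a(t) = 2(t−6)(t−10) if t ≡ 6 (mod 18); 9·M_a(t) = 2(t−7)(t−9) if t ≡ 9 (mod 18); 9·M_a(t) = 2(t−4)(t−12) if t ≡ 12 (mod 18); and 9·M_a(t) = 2(t²−16t+51) if t ≡ 15 (mod 18). -/

import Mathlib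

/-- A 3×3 magic square with magic sum `s`: all nine entries distinct, all row
sums, column sums, the main diagonal sum and the antidiagonal sum equal `s`. -/
def IsMagicSqSum (x : Matrix (Fin 3) (Fin 3) ℤ) (s : ℤ) : Prop :=
  (Function.Injective fun p : Fin 3 × Fin 3 => x p.1 p.2) ∧
  (∀ i, ∑ j, x i j = s) ∧ (∀ j, ∑ i, x i j = s) ∧
  x 0 0 + x 1 1 + x 2 2 = s ∧ x 0 2 + x 1 1 + x 2 0 = s

/-- `Ma t` = number of 3×3 magic squares with positive entries and magic sum t. -/
noncomputable def Ma (t : ℕ) : ℕ :=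
  {x : Matrix (Fin 3) (Fin 3) ℤ |
    IsMagicSqSum x (t : ℤ) ∧ ∀ i j, 0 < x i j}.ncard


open Finset


def Wset (n : ℕ) : Finset (ℕ × ℕ) :=
  (Finset.Icc 1 n ×ˢ Finset.Icc 1 n).filter
    (fun pq => pq.1 + pq.2 ≤ n ∧ pq.1 ≠ pq.2 ∧ pq.1 ≠ 2*pq.2 ∧ pq.2 ≠ 2*pq.1)

def Sl (m : ℕ) : Finset (ℕ × ℕ) :=
  (Finset.Icc 1 m ×ˢ Finset.Icc 1 m).filter
    (fun pq => pq.1 + pq.2 = m ∧ pq.1 ≠ pq.2 ∧ pq.1 ≠ 2*pq.2 ∧ pq.2 ≠ 2*pq.1)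

lemma Wstep (n : ℕ) : Wset (n+1) = Wset n ∪ Sl (n+1) := by
  ext ⟨p, q⟩
  simp only [Wset, Sl, Finset.mem_filter, Finset.mem_union, Finset.mem_product, Finset.mem_Icc]
  omega

lemma Sl_eq (m : ℕ) : Sl m =
    ((Finset.Icc 1 (m-1)).filter
      (fun p => p ≠ m - p ∧ p ≠ 2*(m-p) ∧ m - p ≠ 2*p)).image (fun p => (p, m - p)) := by
  ext ⟨p, q⟩
  simp only [Sl, Finset.mem_filter, Finset.mem_image, Finset.mem_product, Finset.mem_Icc,
    Prod.mk.injEq]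
  constructor
  · rintro ⟨⟨⟨h1, h2⟩, h3, h4⟩, h5, h6, h7, h8⟩
    exact ⟨p, ⟨⟨by omega, by omega⟩, by omega, by omega, by omega⟩, rfl, by omega⟩
  · rintro ⟨a, ⟨⟨ha1, ha2⟩, hb1, hb2, hb3⟩, rfl, rfl⟩
    refine ⟨⟨⟨by omega, by omega⟩, by omega, by omega⟩, by omega, by omega, by omega, by omega⟩

lemma Sl_card (m : ℕ) (hm : 1 ≤ m) :
    (Sl m).card + (if 2 ∣ m then 1 else 0) + (if 3 ∣ m then 2 else 0) = m - 1 := by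
  rw [Sl_eq, Finset.card_image_of_injOn (fun a _ b _ h => (Prod.mk.injEq _ _ _ _ ▸ h).1)]
  have hsplit := Finset.card_filter_add_card_filter_not
    (s := Finset.Icc 1 (m-1)) (p := fun p => p ≠ m - p ∧ p ≠ 2*(m-p) ∧ m - p ≠ 2*p)
  rw [Nat.card_Icc] at hsplit
  have h6 : m % 6 = 0 ∨ m % 6 = 1 ∨ m % 6 = 2 ∨ m % 6 = 3 ∨ m % 6 = 4 ∨ m % 6 = 5 := by omega
  rcases h6 with h6 | h6 | h6 | h6 | h6 | h6
  · -- 6 ∣ m, m ≥ 6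
    have hd2 : 2 ∣ m := by omega
    have hd3 : 3 ∣ m := by omega
    have hkey : ((Finset.Icc 1 (m-1)).filter
        (fun p => ¬(p ≠ m - p ∧ p ≠ 2*(m-p) ∧ m - p ≠ 2*p))) = {m/3, m/2, 2*(m/3)} := by
      ext x
      simp only [Finset.mem_filter, Finset.mem_Icc, Finset.mem_insert, Finset.mem_singleton,
        not_and_or, not_not, ne_eq]
      omega
    rw [hkey] at hsplit
    rw [Finset.card_insert_of_notMem (by simp; omega),
      Finset.card_insert_of_notMem (by simp; omega), Finset.card_singleton] at hsplit
    rw [if_pos hd2, if_pos hd3]; omega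
  · have hd2 : ¬ 2 ∣ m := by omega
    have hd3 : ¬ 3 ∣ m := by omega
    have hkey : ((Finset.Icc 1 (m-1)).filter
        (fun p => ¬(p ≠ m - p ∧ p ≠ 2*(m-p) ∧ m - p ≠ 2*p))) = ∅ := by
      ext x
      simp only [Finset.mem_filter, Finset.mem_Icc, Finset.notMem_empty, iff_false,
        not_and_or, not_not, ne_eq]
      omega
    rw [hkey, Finset.card_empty] at hsplit
    rw [if_neg hd2, if_neg hd3]; omega
  · have hd2 : 2 ∣ m := by omega
    have hd3 : ¬ 3 ∣ m := by omega
    have hkey : ((Finset.Icc 1 (m-1)).filter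
        (fun p => ¬(p ≠ m - p ∧ p ≠ 2*(m-p) ∧ m - p ≠ 2*p))) = {m/2} := by
      ext x
      simp only [Finset.mem_filter, Finset.mem_Icc, Finset.mem_singleton,
        not_and_or, not_not, ne_eq]
      omega
    rw [hkey, Finset.card_singleton] at hsplit
    rw [if_pos hd2, if_neg hd3]; omega
  · have hd2 : ¬ 2 ∣ m := by omega
    have hd3 : 3 ∣ m := by omega
    have hkey : ((Finset.Icc 1 (m-1)).filter
        (fun p => ¬(p ≠ m - p ∧ p ≠ 2*(m-p) ∧ m - p ≠ 2*p))) = {m/3, 2*(m/3)} := by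
      ext x
      simp only [Finset.mem_filter, Finset.mem_Icc, Finset.mem_insert, Finset.mem_singleton,
        not_and_or, not_not, ne_eq]
      omega
    rw [hkey] at hsplit
    rw [Finset.card_insert_of_notMem (by simp; omega), Finset.card_singleton] at hsplit
    rw [if_neg hd2, if_pos hd3]; omega
  · have hd2 : 2 ∣ m := by omega
    have hd3 : ¬ 3 ∣ m := by omega
    have hkey : ((Finset.Icc 1 (m-1)).filter
        (fun p => ¬(p ≠ m - p ∧ p ≠ 2*(m-p) ∧ m - p ≠ 2*p))) = {m/2} := by
      ext x
      simp only [Finset.mem_filter, Finset.mem_Icc, Finset.mem_singleton,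
        not_and_or, not_not, ne_eq]
      omega
    rw [hkey, Finset.card_singleton] at hsplit
    rw [if_pos hd2, if_neg hd3]; omega
  · have hd2 : ¬ 2 ∣ m := by omega
    have hd3 : ¬ 3 ∣ m := by omega
    have hkey : ((Finset.Icc 1 (m-1)).filter
        (fun p => ¬(p ≠ m - p ∧ p ≠ 2*(m-p) ∧ m - p ≠ 2*p))) = ∅ := by
      ext x
      simp only [Finset.mem_filter, Finset.mem_Icc, Finset.notMem_empty, iff_false,
        not_and_or, not_not, ne_eq]
      omega
    rw [hkey, Finset.card_empty] at hsplit
    rw [if_neg hd2, if_neg hd3]; omega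

lemma Wcard (n : ℕ) : 6 * (Wset n).card + 6 * (n/2) + 12 * (n/3) = 3 * (n * (n-1)) := by
  induction n with
  | zero => decide
  | succ n ih =>
    have hdisj : Disjoint (Wset n) (Sl (n+1)) := by
      rw [Finset.disjoint_left]
      rintro ⟨p, q⟩ hp hq
      simp only [Wset, Sl, Finset.mem_filter, Finset.mem_product, Finset.mem_Icc] at hp hq
      omega
    have hcard : (Wset (n+1)).card = (Wset n).card + (Sl (n+1)).card := by
      rw [Wstep, Finset.card_union_of_disjoint hdisj]
    have hsl := Sl_card (n+1) (by omega)
    have hmul : (n+1) * ((n+1) - 1) = n * (n-1) + 2*n := by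
      rcases n with _ | k
      · rfl
      · simp only [Nat.add_sub_cancel]; ring
    rw [hcard, hmul]
    generalize n * (n - 1) = A at *
    by_cases h2 : 2 ∣ (n+1) <;> by_cases h3 : 3 ∣ (n+1) <;>
      simp only [h2, h3, if_true, if_false] at hsl <;> omega

noncomputable def Vset (n : ℕ) : Finset (ℤ × ℤ) :=
  (Finset.Icc (-(n:ℤ)) (n:ℤ) ×ˢ Finset.Icc (-(n:ℤ)) (n:ℤ)).filter
    (fun ab => ab.1 ≠ 0 ∧ ab.2 ≠ 0 ∧ ab.1 ≠ ab.2 ∧ ab.1 ≠ -ab.2 ∧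
      ab.1 ≠ 2*ab.2 ∧ ab.1 ≠ -(2*ab.2) ∧ ab.2 ≠ 2*ab.1 ∧ ab.2 ≠ -(2*ab.1) ∧
      ab.1.natAbs + ab.2.natAbs ≤ n)

lemma Vcard (n : ℕ) : (Vset n).card = 4 * (Wset n).card := by
  classical
  have himg : Vset n =
      ((Finset.univ : Finset (Bool × Bool)) ×ˢ Wset n).image
        (fun x : (Bool × Bool) × ℕ × ℕ =>
          ((if x.1.1 then (x.2.1 : ℤ) else -(x.2.1 : ℤ)),
           (if x.1.2 then (x.2.2 : ℤ) else -(x.2.2 : ℤ)))) := by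
    ext ⟨a, b⟩
    constructor
    · intro hv
      simp only [Vset, Finset.mem_filter, Finset.mem_product, Finset.mem_Icc] at hv
      obtain ⟨-, h1, h2, h3, h4, h5, h6, h7, h8, h9⟩ := hv
      have hw : (a.natAbs, b.natAbs) ∈ Wset n := by
        simp only [Wset, Finset.mem_filter, Finset.mem_product, Finset.mem_Icc]
        refine ⟨⟨⟨?_, ?_⟩, ?_, ?_⟩, ?_, ?_, ?_⟩ <;> omega
      rcases lt_or_ge 0 a with ha | ha <;> rcases lt_or_ge 0 b with hb | hb
      · refine Finset.mem_image.2 ⟨((true, true), (a.natAbs, b.natAbs)), by simpa using hw, ?_⟩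
        simp only [if_true, Prod.mk.injEq]
        omega
      · refine Finset.mem_image.2 ⟨((true, false), (a.natAbs, b.natAbs)), by simpa using hw, ?_⟩
        simp only [Bool.false_eq_true, if_true, if_false, Prod.mk.injEq]
        omega
      · refine Finset.mem_image.2 ⟨((false, true), (a.natAbs, b.natAbs)), by simpa using hw, ?_⟩
        simp only [Bool.false_eq_true, if_true, if_false, Prod.mk.injEq]
        omega
      · refine Finset.mem_image.2 ⟨((false, false), (a.natAbs, b.natAbs)), by simpa using hw, ?_⟩
        simp only [Bool.false_eq_true, if_false, Prod.mk.injEq]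
        omega
    · intro hv
      obtain ⟨⟨⟨s, u⟩, p, q⟩, hm, hx⟩ := Finset.mem_image.1 hv
      simp only [Finset.mem_product, Finset.mem_univ, true_and, Wset, Finset.mem_filter,
        Finset.mem_Icc] at hm
      obtain ⟨⟨⟨hp1, hp2⟩, hq1, hq2⟩, hs, hd1, hd2, hd3⟩ := hm
      rw [Prod.ext_iff] at hx
      obtain ⟨hx1, hx2⟩ := hx
      simp only [Vset, Finset.mem_filter, Finset.mem_product, Finset.mem_Icc]
      rcases s <;> rcases u <;>
        simp only [Bool.false_eq_true, if_true, if_false] at hx1 hx2 <;>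
        refine ⟨⟨⟨?_, ?_⟩, ?_, ?_⟩, ?_, ?_, ?_, ?_, ?_, ?_, ?_, ?_, ?_⟩ <;> omega
  rw [himg, Finset.card_image_of_injOn, Finset.card_product]
  · simp [Finset.card_univ]
  · rintro ⟨⟨s, u⟩, p, q⟩ hm ⟨⟨s', u'⟩, p', q'⟩ hm' h
    simp only [Finset.mem_coe, Wset, Finset.mem_product, Finset.mem_univ, true_and, Finset.mem_filter,
      Finset.mem_Icc] at hm hm'
    simp only [Prod.mk.injEq] at h ⊢
    obtain ⟨⟨⟨hp, _⟩, hq, _⟩, _⟩ := hm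
    obtain ⟨⟨⟨hp', _⟩, hq', _⟩, _⟩ := hm'
    rcases s <;> rcases s' <;> rcases u <;> rcases u' <;>
      simp only [Bool.false_eq_true, if_true, if_false] at h <;>
      refine ⟨⟨?_, ?_⟩, ?_, ?_⟩ <;> first | rfl | omega

def Fm (c a b : ℤ) : Matrix (Fin 3) (Fin 3) ℤ :=
  !![c+a, c-a-b, c+b; c-a+b, c, c+a-b; c-b, c+a+b, c-a]

lemma magic_entries {x : Matrix (Fin 3) (Fin 3) ℤ} {s : ℤ} (h : IsMagicSqSum x s) :
    3 * x 1 1 = s ∧ x 0 1 = s - x 0 0 - x 0 2 ∧ x 1 0 = s - x 0 0 - x 2 0 ∧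
    x 1 2 = s - x 0 2 - x 2 2 ∧ x 2 1 = s - x 2 0 - x 2 2 ∧
    x 2 2 = s - x 0 0 - x 1 1 ∧ x 2 0 = s - x 0 2 - x 1 1 := by
  obtain ⟨-, hr, hc, hd, he⟩ := h
  have hr0 := hr 0; have hr1 := hr 1; have hr2 := hr 2
  have hc0 := hc 0; have hc1 := hc 1; have hc2 := hc 2
  simp only [Fin.sum_univ_three] at hr0 hr1 hr2 hc0 hc1 hc2
  refine ⟨by omega, by omega, by omega, by omega, by omega, by omega, by omega⟩

set_option maxHeartbeats 2000000 in
lemma Fm_inj (c a b : ℤ) (h1 : a ≠ 0) (h2 : b ≠ 0) (h3 : a ≠ b) (h4 : a ≠ -b)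
    (h5 : a ≠ 2*b) (h6 : a ≠ -(2*b)) (h7 : b ≠ 2*a) (h8 : b ≠ -(2*a)) :
    Function.Injective (fun p : Fin 3 × Fin 3 => Fm c a b p.1 p.2) := by
  intro p q heq
  simp only at heq
  obtain ⟨i, j⟩ := p
  obtain ⟨k, l⟩ := q
  unfold Fm at heq
  fin_cases i <;> fin_cases j <;> fin_cases k <;> fin_cases l <;>
    simp_all <;> omega

set_option maxHeartbeats 1000000 in
lemma magic_set_eq (c : ℤ) (n : ℕ) (hc : 1 ≤ c) (hn : (n : ℤ) = c - 1) :
    {x : Matrix (Fin 3) (Fin 3) ℤ | IsMagicSqSum x (3*c) ∧ ∀ i j, 0 < x i j} =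
    ↑((Vset n).image (fun ab => Fm c ab.1 ab.2)) := by
  ext x
  simp only [Set.mem_setOf_eq, Finset.coe_image, Set.mem_image, Finset.mem_coe]
  constructor
  · rintro ⟨hm, hpos⟩
    obtain ⟨h11, h01, h10, h12, h21, h22, h20⟩ := magic_entries hm
    obtain ⟨hinj, -, -, -, -⟩ := hm
    set a := x 0 0 - c with ha
    set b := x 0 2 - c with hb
    have hx : x = Fm c a b := by
      have e00 : x 0 0 = c + a := by omega
      have e02 : x 0 2 = c + b := by omega
      ext i j
      fin_cases i <;> fin_cases j <;>
        simp [Fm, Fin.sum_univ_three] <;> omega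
    have hne : ∀ p q : Fin 3 × Fin 3, p ≠ q → x p.1 p.2 ≠ x q.1 q.2 := by
      intro p q hpq heq
      exact hpq (hinj heq)
    refine ⟨(a, b), ?_, hx.symm⟩
    have d1 : x 0 0 ≠ x 2 2 := hne (0,0) (2,2) (by decide)
    have d2 : x 0 2 ≠ x 2 0 := hne (0,2) (2,0) (by decide)
    have d3 : x 0 0 ≠ x 0 2 := hne (0,0) (0,2) (by decide)
    have d4 : x 0 0 ≠ x 2 0 := hne (0,0) (2,0) (by decide)
    have d5 : x 2 1 ≠ x 2 0 := hne (2,1) (2,0) (by decide)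
    have d6 : x 0 0 ≠ x 1 0 := hne (0,0) (1,0) (by decide)
    have d7 : x 2 1 ≠ x 2 2 := hne (2,1) (2,2) (by decide)
    have d8 : x 0 2 ≠ x 1 2 := hne (0,2) (1,2) (by decide)
    have p1 := hpos 0 1
    have p2 := hpos 2 1
    have p3 := hpos 1 0
    have p4 := hpos 1 2
    simp only [Vset, Finset.mem_filter, Finset.mem_product, Finset.mem_Icc]
    refine ⟨⟨⟨?_, ?_⟩, ?_, ?_⟩, ?_, ?_, ?_, ?_, ?_, ?_, ?_, ?_, ?_⟩ <;> omega
  · rintro ⟨⟨a, b⟩, hab, rfl⟩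
    simp only [Vset, Finset.mem_filter, Finset.mem_product, Finset.mem_Icc] at hab
    obtain ⟨-, h1, h2, h3, h4, h5, h6, h7, h8, h9⟩ := hab
    refine ⟨⟨?_, ?_, ?_, ?_, ?_⟩, ?_⟩
    · exact Fm_inj c a b h1 h2 h3 h4 h5 h6 h7 h8
    · intro i
      fin_cases i <;>
        simp [Fm, Fin.sum_univ_three] <;> ring
    · intro j
      fin_cases j <;>
        simp [Fm, Fin.sum_univ_three] <;> ring
    · simp [Fm, Fin.sum_univ_three]
      ring
    · simp [Fm, Fin.sum_univ_three]
      ring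
    · intro i j
      fin_cases i <;> fin_cases j <;>
        simp [Fm, Fin.sum_univ_three] <;> omega

lemma Ma_zero (t : ℕ) (h3 : ¬ 3 ∣ t) : Ma t = 0 := by
  unfold Ma
  convert Set.ncard_empty (Matrix (Fin 3) (Fin 3) ℤ)
  ext x
  simp only [Set.mem_setOf_eq, Set.mem_empty_iff_false, iff_false]
  rintro ⟨hm, -⟩
  obtain ⟨h11, -⟩ := magic_entries hm
  exact h3 (by omega)

lemma Ma_eq (t : ℕ) (c : ℤ) (hc : 1 ≤ c) (htc : (t : ℤ) = 3 * c) :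
    Ma t = 4 * (Wset (c-1).toNat).card := by
  have hn : (((c-1).toNat : ℕ) : ℤ) = c - 1 := Int.toNat_of_nonneg (by omega)
  have hinj : Set.InjOn (fun ab : ℤ × ℤ => Fm c ab.1 ab.2) (Vset (c-1).toNat) := by
    rintro ⟨a, b⟩ _ ⟨a', b'⟩ _ h
    simp only at h
    have h00 := congrFun (congrFun h 0) 0
    have h02 := congrFun (congrFun h 0) 2
    simp [Fm] at h00 h02
    exact Prod.ext (by omega) (by omega)
  unfold Ma
  rw [htc, magic_set_eq c ((c-1).toNat) hc hn, Set.ncard_coe_finset,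
    Finset.card_image_of_injOn hinj, Vcard]

lemma Ma_key (t : ℕ) (ht : 3 ≤ t) (h3 : 3 ∣ t) :
    ∃ n d2 d3 : ℤ, 0 ≤ n ∧ (t : ℤ) = 3*n+3 ∧ 2*d2 ≤ n ∧ n ≤ 2*d2+1 ∧
      3*d3 ≤ n ∧ n ≤ 3*d3+2 ∧
      9 * (Ma t : ℤ) = 18*n*(n-1) - 36*d2 - 72*d3 := by
  obtain ⟨c, rfl⟩ := h3
  have hc1 : 1 ≤ c := by omega
  have hcz : (1 : ℤ) ≤ (c : ℤ) := by exact_mod_cast hc1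
  have hMa := Ma_eq (3*c) (c : ℤ) hcz (by push_cast; ring)
  set n := ((c : ℤ)-1).toNat with hndef
  have hnc : ((n : ℕ) : ℤ) = (c : ℤ) - 1 := Int.toNat_of_nonneg (by omega)
  have hW := Wcard n
  have hm : ((n*(n-1) : ℕ) : ℤ) = (n : ℤ) * ((n : ℤ) - 1) := by
    rcases n with _ | k
    · simp
    · simp only [Nat.add_sub_cancel]
      push_cast
      ring
  have hWz : 6*((Wset n).card : ℤ) + 6*((n/2 : ℕ) : ℤ) + 12*((n/3 : ℕ) : ℤ)
      = 3*(((n*(n-1) : ℕ)) : ℤ) := by exact_mod_cast congrArg (fun k : ℕ => (k : ℤ)) hW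
  rw [hm] at hWz
  have hMaz : ((Ma (3*c) : ℕ) : ℤ) = 4 * ((Wset n).card : ℤ) := by exact_mod_cast hMa
  refine ⟨(n : ℤ), ((n/2 : ℕ) : ℤ), ((n/3 : ℕ) : ℤ), by positivity, by omega,
    by omega, by omega, by omega, by omega, ?_⟩
  linear_combination 9 * hMaz + 6 * hWz

theorem magic_affine_count (t : ℕ) (ht : 1 ≤ t) :
    (¬ (3 ∣ t) → Ma t = 0) ∧
    (t % 18 = 0 → 9 * (Ma t : ℤ) = 2 * ((t : ℤ)^2 - 16*(t : ℤ) + 72)) ∧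
    (t % 18 = 3 → 9 * (Ma t : ℤ) = 2 * ((t : ℤ) - 3) * ((t : ℤ) - 13)) ∧
    (t % 18 = 6 → 9 * (Ma t : ℤ) = 2 * ((t : ℤ) - 6) * ((t : ℤ) - 10)) ∧
    (t % 18 = 9 → 9 * (Ma t : ℤ) = 2 * ((t : ℤ) - 7) * ((t : ℤ) - 9)) ∧
    (t % 18 = 12 → 9 * (Ma t : ℤ) = 2 * ((t : ℤ) - 4) * ((t : ℤ) - 12)) ∧
    (t % 18 = 15 → 9 * (Ma t : ℤ) = 2 * ((t : ℤ)^2 - 16*(t : ℤ) + 51)) := by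
  refine ⟨fun h3 => Ma_zero t h3, ?_, ?_, ?_, ?_, ?_, ?_⟩ <;> intro hr <;>
    obtain ⟨n, d2, d3, hn0, htn, h21, h22, h31, h32, hMa⟩ :=
      Ma_key t (by omega) (by omega)
  · have hd2 : 2*d2 = n - 1 := by omega
    have hd3 : 3*d3 = n - 2 := by omega
    rw [htn] at *
    linear_combination hMa - 18 * hd2 - 24 * hd3
  · have hd2 : 2*d2 = n := by omega
    have hd3 : 3*d3 = n := by omega
    rw [htn] at *
    linear_combination hMa - 18 * hd2 - 24 * hd3
  · have hd2 : 2*d2 = n - 1 := by omega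
    have hd3 : 3*d3 = n - 1 := by omega
    rw [htn] at *
    linear_combination hMa - 18 * hd2 - 24 * hd3
  · have hd2 : 2*d2 = n := by omega
    have hd3 : 3*d3 = n - 2 := by omega
    rw [htn] at *
    linear_combination hMa - 18 * hd2 - 24 * hd3
  · have hd2 : 2*d2 = n - 1 := by omega
    have hd3 : 3*d3 = n := by omega
    rw [htn] at *
    linear_combination hMa - 18 * hd2 - 24 * hd3
  · have hd2 : 2*d2 = n := by omega
    have hd3 : 3*d3 = n - 1 := by omega
    rw [htn] at *
    linear_combination hMa - 18 * hd2 - 24 * hd3
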